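/- Let F ∈ L_γ for γ > 0 with φ_F(γ) < ∞, and let ξ₁,…,ξ_n be i.i.d. with distribution F, S_{n−1} = ξ₁ + ⋯ + ξ_{n−1}, S_n = S_{n−1} + ξ_n. Then for every fixed a ∈ ℝ and n ≥ 1, P(S_{n−1} ≤ a, S_n > x) ∼ F̄(x) · E[e^{γ S_{n−1}} 1{S_{n−1} ≤ a}] as x → ∞. -/

import Mathlib

open MeasureTheory Filter Set

/-- The tail distribution function of a probability measure on ℝ. -/
noncomputable def tail (μ : Measure ℝ) (x : ℝ) : ℝ := (μ (Set.Ioi x)).toReal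

/-- The exponential moment `φ_F(α) = ∫ e^{αx} dF(x)`, valued in `[0,∞]`. -/
noncomputable def expMoment (μ : Measure ℝ) (α : ℝ) : ENNReal :=
  ∫⁻ x, ENNReal.ofReal (Real.exp (α * x)) ∂μ

/-- The class `L_γ`: positive tail, and `F̄(x-k)/F̄(x) → e^{γ k}` for every fixed `k`. -/
def MemL (μ : Measure ℝ) (γ : ℝ) : Prop :=
  (∀ x, 0 < tail μ x) ∧
  ∀ k : ℝ, Tendsto (fun x => tail μ (x - k) / tail μ x) atTop (nhds (Real.exp (γ * k)))

lemma tail_antitone (μ : Measure ℝ) [IsFiniteMeasure μ] : Antitone (tail μ) := fun x y h =>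
  ENNReal.toReal_mono (measure_ne_top μ _) (measure_mono (Set.Ioi_subset_Ioi h))

lemma tail_measurable (μ : Measure ℝ) [IsFiniteMeasure μ] : Measurable (tail μ) :=
  (tail_antitone μ).measurable

lemma tail_nonneg (μ : Measure ℝ) (x : ℝ) : 0 ≤ tail μ x := ENNReal.toReal_nonneg

theorem joint_tail_equiv {Ω : Type*} [MeasurableSpace Ω]
    (ℙ : Measure Ω) [IsProbabilityMeasure ℙ]
    (μ : Measure ℝ) [IsProbabilityMeasure μ]
    (ξ : ℕ → Ω → ℝ) (hmeas : ∀ i, Measurable (ξ i))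
    (hindep : ProbabilityTheory.iIndepFun ξ ℙ)
    (hdist : ∀ i, Measure.map (ξ i) ℙ = μ)
    (S : ℕ → Ω → ℝ) (hS : ∀ n ω, S n ω = ∑ i ∈ Finset.range n, ξ i ω)
    (γ : ℝ) (hγ : 0 < γ) (hL : MemL μ γ) (hφ : expMoment μ γ < ⊤)
    (a : ℝ) (n : ℕ) (hn : 1 ≤ n) :
    Tendsto (fun x =>
        (ℙ {ω | S (n - 1) ω ≤ a ∧ x < S n ω}).toReal / tail μ x) atTop
      (nhds (∫ ω in {ω | S (n - 1) ω ≤ a}, Real.exp (γ * S (n - 1) ω) ∂ℙ)) := by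
  classical
  obtain ⟨m, rfl⟩ : ∃ m, n = m + 1 := ⟨n - 1, (Nat.succ_pred_eq_of_pos hn).symm⟩
  simp only [Nat.add_sub_cancel]
  have hT : Measurable (S m) := by
    have h : S m = fun ω => ∑ i ∈ Finset.range m, ξ i ω := funext fun ω => hS m ω
    rw [h]; exact Finset.measurable_sum _ fun i _ => hmeas i
  have hY : Measurable (ξ m) := hmeas m
  -- independence of S m and ξ m
  have hTY : ProbabilityTheory.IndepFun (S m) (ξ m) ℙ := by
    have h := hindep.indepFun_finset_sum_of_notMem hmeas
      (Finset.notMem_range_self (n := m))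
    have he : (∑ j ∈ Finset.range m, ξ j) = S m := by
      funext ω; rw [hS]; simp [Finset.sum_apply]
    rwa [he] at h
  set ν : Measure ℝ := Measure.map (S m) ℙ with hν
  have hνprob : IsProbabilityMeasure ν := Measure.isProbabilityMeasure_map hT.aemeasurable
  have hmap : Measure.map (fun ω => (S m ω, ξ m ω)) ℙ = ν.prod μ := by
    rw [hν, ← hdist m]
    exact (ProbabilityTheory.indepFun_iff_map_prod_eq_prod_map_map
      hT.aemeasurable hY.aemeasurable).mp hTY
  have hSn : ∀ ω, S (m + 1) ω = S m ω + ξ m ω := by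
    intro ω; rw [hS, hS, Finset.sum_range_succ]
  -- the key identity
  have key : ∀ x : ℝ, ℙ {ω | S m ω ≤ a ∧ x < S (m + 1) ω}
      = ∫⁻ t in Set.Iic a, μ (Set.Ioi (x - t)) ∂ν := by
    intro x
    set s : Set (ℝ × ℝ) := {p : ℝ × ℝ | p.1 ≤ a ∧ x < p.1 + p.2} with hsdef
    have hs : MeasurableSet s :=
      (measurableSet_le measurable_fst measurable_const).inter
        (measurableSet_lt measurable_const (measurable_fst.add measurable_snd))
    have hset : {ω | S m ω ≤ a ∧ x < S (m + 1) ω}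
        = (fun ω => (S m ω, ξ m ω)) ⁻¹' s := by
      ext ω; simp [hsdef, hSn ω]
    rw [hset, ← Measure.map_apply (hT.prodMk hY) hs, hmap, Measure.prod_apply hs]
    have hfib : ∀ t : ℝ, μ (Prod.mk t ⁻¹' s)
        = (Set.Iic a).indicator (fun t => μ (Set.Ioi (x - t))) t := by
      intro t
      by_cases h : t ≤ a
      · have he : Prod.mk t ⁻¹' s = Set.Ioi (x - t) := by
          ext y; simp [hsdef, h, sub_lt_iff_lt_add']
        rw [he, Set.indicator_of_mem (Set.mem_Iic.mpr h)]
      · have he : Prod.mk t ⁻¹' s = ∅ := by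
          ext y; simp [hsdef, h]
        rw [he, Set.indicator_of_notMem (by simpa using h)]; simp
    rw [lintegral_congr hfib, lintegral_indicator measurableSet_Iic _]
  -- measurability of t ↦ μ (Ioi (x - t))
  have hmf : ∀ x : ℝ, Measurable fun t => μ (Set.Ioi (x - t)) := by
    intro x
    have h : (fun t => μ (Set.Ioi (x - t)))
        = fun t => ENNReal.ofReal (tail μ (x - t)) := by
      funext t; exact (ENNReal.ofReal_toReal (measure_ne_top μ _)).symm
    rw [h]
    exact ENNReal.measurable_ofReal.comp
      ((tail_measurable μ).comp (measurable_const.sub measurable_id))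
  -- rewrite the ratio as an integral
  have hratio : ∀ x : ℝ, (ℙ {ω | S m ω ≤ a ∧ x < S (m + 1) ω}).toReal / tail μ x
      = ∫ t in Set.Iic a, tail μ (x - t) / tail μ x ∂ν := by
    intro x
    rw [key x]
    have h1 : (∫⁻ t in Set.Iic a, μ (Set.Ioi (x - t)) ∂ν).toReal
        = ∫ t in Set.Iic a, tail μ (x - t) ∂ν := by
      rw [← integral_toReal ((hmf x).aemeasurable.restrict)
        (Filter.Eventually.of_forall fun t => measure_lt_top μ _)]
      rfl
    rw [h1, ← integral_div]
  -- rewrite the limit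
  have hlim : (∫ ω in {ω | S m ω ≤ a}, Real.exp (γ * S m ω) ∂ℙ)
      = ∫ t in Set.Iic a, Real.exp (γ * t) ∂ν := by
    rw [hν, setIntegral_map measurableSet_Iic
      ((measurable_const_mul γ).exp.aestronglyMeasurable) hT.aemeasurable]
    rfl
  rw [hlim]
  refine Tendsto.congr (fun x => (hratio x).symm) ?_
  -- dominated convergence
  refine tendsto_integral_filter_of_dominated_convergence
    (fun _ => Real.exp (γ * a) + 1) ?_ ?_ (integrable_const _) ?_
  · exact Filter.Eventually.of_forall fun x =>
      (((tail_measurable μ).comp (measurable_const.sub measurable_id)).div_const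
        _).aestronglyMeasurable
  · have hb : ∀ᶠ x in atTop, tail μ (x - a) / tail μ x < Real.exp (γ * a) + 1 :=
      (hL.2 a).eventually_lt_const (lt_add_one _)
    filter_upwards [hb] with x hx
    rw [ae_restrict_iff' measurableSet_Iic]
    refine Filter.Eventually.of_forall fun t ht => ?_
    have h0 : 0 ≤ tail μ (x - t) / tail μ x :=
      div_nonneg (tail_nonneg μ _) (tail_nonneg μ _)
    rw [Real.norm_eq_abs, abs_of_nonneg h0]
    have hle : tail μ (x - t) ≤ tail μ (x - a) :=
      tail_antitone μ (sub_le_sub_left ht x)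
    calc tail μ (x - t) / tail μ x ≤ tail μ (x - a) / tail μ x :=
          div_le_div_of_nonneg_right hle (tail_nonneg μ x)
      _ ≤ Real.exp (γ * a) + 1 := hx.le
  · exact Filter.Eventually.of_forall fun t => hL.2 t
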